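/- For every word-representable graph G and every n ≥ 2, l(G ∘ K_n) ≤ n·l(G) + (n−1)·κ_G, where l is minimum word-representant length, κ_G is the maximum clique size of G, and G ∘ K_n is the rooted product of G with K_n rooted at a fixed vertex. -/

import Mathlib

open SimpleGraph

variable {V : Type*}

/-- Two distinct letters `x` and `y` alternate in a word `w` if the subsequence of `w`
consisting of all occurrences of `x` and `y` is strictly alternating. -/
def Alternates [DecidableEq V] (x y : V) (w : List V) : Prop :=
  (w.filter (fun z => decide (z = x ∨ z = y))).Chain' (· ≠ ·)

/-- A word `w` represents the graph `G` if it contains every vertex at least once and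
two distinct vertices are adjacent iff they alternate in `w`. -/
def Represents [DecidableEq V] (G : SimpleGraph V) (w : List V) : Prop :=
  (∀ v : V, v ∈ w) ∧ ∀ x y : V, x ≠ y → (G.Adj x y ↔ Alternates x y w)

/-- A graph is word-representable if some word represents it. -/
def WordRepresentable [DecidableEq V] (G : SimpleGraph V) : Prop :=
  ∃ w : List V, Represents G w

/-- `l(G)`: the minimum length of a word-representant of `G`. -/
noncomputable def reprLen [DecidableEq V] (G : SimpleGraph V) : ℕ :=
  sInf {n | ∃ w : List V, Represents G w ∧ w.length = n}

/-- The rooted product `G ∘ H` with root `r : U`: copies of `H` indexed by `V(G)`,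
with each vertex `u` of `G` identified with the root of the `u`-th copy. -/
def rootedProd {U : Type*} (G : SimpleGraph V) (H : SimpleGraph U) (r : U) :
    SimpleGraph (V × U) where
  Adj p q := (p.1 = q.1 ∧ H.Adj p.2 q.2) ∨ (p.2 = r ∧ q.2 = r ∧ G.Adj p.1 q.1)
  symm := by
    constructor
    intro p q h
    rcases h with ⟨h1, h2⟩ | ⟨h1, h2, h3⟩
    · exact Or.inl ⟨h1.symm, h2.symm⟩
    · exact Or.inr ⟨h2, h1, h3.symm⟩
  loopless := by
    constructor
    intro p h
    rcases h with ⟨_, h2⟩ | ⟨_, _, h3⟩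
    · exact h2.ne rfl
    · exact h3.ne rfl

-- scratch area for auxiliary lemmas
section Aux
variable [DecidableEq V]

def rpX (n : ℕ) (r : Fin n) : List (Fin n) := (List.finRange n).filter (fun x => decide (x ≠ r))

lemma rpX_mem {n : ℕ} {r x : Fin n} : x ∈ rpX n r ↔ x ≠ r := by
  simp [rpX]

lemma rpX_nodup (n : ℕ) (r : Fin n) : (rpX n r).Nodup :=
  (List.nodup_finRange n).filter _

lemma rpX_length {n : ℕ} (r : Fin n) : (rpX n r).length = n - 1 := by
  classical
  have h1 : ((List.finRange n).filter (fun x => decide (x = r))).length = 1 := by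
    rw [List.filter_eq]
    simp [List.count_eq_one_of_mem (List.nodup_finRange n) (List.mem_finRange r)]
  have h2 : ((List.finRange n).filter (fun x => decide (x ≠ r))).length
      + ((List.finRange n).filter (fun x => decide (x = r))).length = n := by
    rw [← List.countP_eq_length_filter, ← List.countP_eq_length_filter]
    have := List.length_eq_countP_add_countP (p := fun x => decide (x = r)) (l := List.finRange n)
    simp only [List.length_finRange] at this
    have h3 : (List.countP (fun x => decide (x ≠ r)) (List.finRange n))
        = (List.countP (fun a => decide (¬decide (a = r) = true)) (List.finRange n)) := by
      apply List.countP_congr; intro x _; simp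
    omega
  have hn : 1 ≤ n := by
    rcases Nat.eq_zero_or_pos n with h | h
    · exact absurd r.2 (by omega)
    · exact h
  rw [rpX]; omega

end Aux

section Aux2
variable [DecidableEq V]

def rpXrX (n : ℕ) (r : Fin n) : List (Fin n) := rpX n r ++ r :: rpX n r

def rpShape (n : ℕ) (r : Fin n) (e : Bool) (k : ℕ) : List (Fin n) :=
  if k = 0 then (if e then [r] else rpXrX n r)
  else if k = 1 then rpXrX n r else rpX n r ++ [r]

def rpBuild (n : ℕ) (r : Fin n) : (V → Bool) → List V → List (V × Fin n)
  | _, [] => []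
  | seen, v :: t =>
      (rpShape n r (seen v) (t.count v)).map (fun x => (v, x)) ++
        rpBuild n r (fun u => if u = v then true else seen u) t

def rpVword (n : ℕ) (r : Fin n) : Bool → ℕ → List (Fin n)
  | _, 0 => []
  | e, t+1 => rpShape n r e t ++ rpVword n r true t

-- generic list facts

lemma nodup_pair_eq {α : Type*} {a b : α} (hab : a ≠ b) :
    ∀ (l : List α), l.Nodup → a ∈ l → b ∈ l → (∀ x ∈ l, x = a ∨ x = b) →
      l = [a, b] ∨ l = [b, a] := by
  intro l
  match l with
  | [] => intro _ ha; simp at ha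
  | [x] =>
    intro _ ha hb _
    simp only [List.mem_singleton] at ha hb
    exact absurd (ha.trans hb.symm) hab
  | x :: y :: l' =>
    intro hnd ha hb hall
    have hx := hall x (by simp)
    have hy := hall y (by simp)
    have hxy : x ≠ y := by
      intro hEq; exact (List.nodup_cons.1 hnd).1 (hEq ▸ List.mem_cons_self (a := y) (l := l'))
    have hl' : l' = [] := by
      by_contra hne
      obtain ⟨z, hz⟩ := List.exists_mem_of_ne_nil l' hne
      have hzz := hall z (by simp [hz])
      have hznx : z ≠ x := by
        intro hEq
        exact (List.nodup_cons.1 hnd).1 (by simp [← hEq, hz])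
      have hzny : z ≠ y := by
        intro hEq
        exact (List.nodup_cons.1 (List.nodup_cons.1 hnd).2).1 (hEq ▸ hz)
      rcases hx with hx | hx <;> rcases hy with hy | hy <;> rcases hzz with hzz | hzz <;>
        first
          | (exact hznx (by rw [hzz, ← hx]))
          | (exact hzny (by rw [hzz, ← hy]))
          | (exact hxy (by rw [hx, ← hy]))
    subst hl'
    rcases hx with hx | hx <;> rcases hy with hy | hy
    · exact absurd (hx.trans hy.symm) hxy
    · left; rw [hx, hy]
    · right; rw [hx, hy]
    · exact absurd (hx.trans hy.symm) hxy

lemma nodup_single_eq {α : Type*} [DecidableEq α] :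
    ∀ (l : List α) (a : α), l.Nodup → a ∈ l → (∀ x ∈ l, x = a) → l = [a] := by
  intro l a hnd ha hall
  have hrep := List.eq_replicate_of_mem hall
  have hc : l.count a = 1 := List.count_eq_one_of_mem hnd ha
  rw [hrep] at hc
  simp at hc
  rw [hrep, hc]
  simp

end Aux2

section Aux3
variable [DecidableEq V]

lemma chain'_join_replicate {α : Type*} {a b : α} (hab : a ≠ b) :
    ∀ m : ℕ, List.Chain' (· ≠ ·) ((List.replicate m [a, b]).flatten) := by
  intro m
  induction m with
  | zero => simp [List.Chain']
  | succ m ih =>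
    rw [List.replicate_succ, List.flatten_cons]
    apply List.IsChain.append _ ih
    · intro x hx y hy
      simp only [List.getLast?_cons_cons, List.getLast?_singleton, Option.mem_some_iff] at hx
      cases m with
      | zero => simp at hy
      | succ m =>
        rw [List.replicate_succ, List.flatten_cons] at hy
        simp only [List.cons_append, List.head?_cons, Option.mem_some_iff] at hy
        rw [← hx, ← hy]
        exact hab.symm
    · simp [List.Chain', hab, hab.symm]

lemma not_chain'_of_dup {α : Type*} {p : α} {A B : List α} :
    ¬ List.Chain' (· ≠ ·) (A ++ p :: p :: B) := by
  intro h
  have : List.Chain' (· ≠ ·) [p, p] :=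
    h.infix ⟨A, B, by simp⟩
  simp [List.Chain'] at this

-- filter of shapes
lemma filter_map_pair {n : ℕ} (v : V) (s : List (Fin n)) (p : V × Fin n → Bool) :
    ((s.map (fun x => (v, x))).filter p) = ((s.filter (fun x => p (v, x))).map (fun x => (v, x))) := by
  rw [List.filter_map]
  rfl

end Aux3

section Aux4
variable {n : ℕ} {r : Fin n}

lemma rpVword_succ (e : Bool) (t : ℕ) :
    rpVword n r e (t+1) = rpShape n r e t ++ rpVword n r true t := rfl

lemma rpVword_zero (e : Bool) : rpVword n r e 0 = [] := rfl

lemma rpShape_zero (e : Bool) : rpShape n r e 0 = if e then [r] else rpXrX n r := by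
  simp [rpShape]

lemma rpShape_one (e : Bool) : rpShape n r e 1 = rpXrX n r := by
  simp [rpShape]

lemma rpShape_big (e : Bool) {k : ℕ} (hk : 2 ≤ k) : rpShape n r e k = rpX n r ++ [r] := by
  rw [rpShape, if_neg (by omega), if_neg (by omega)]

lemma filter_rpX_pair {a b : Fin n} (haR : a ≠ r) (hbR : b ≠ r) (hab : a ≠ b) :
    (rpX n r).filter (fun x => decide (x = a ∨ x = b)) = [a, b] ∨
    (rpX n r).filter (fun x => decide (x = a ∨ x = b)) = [b, a] := by
  apply nodup_pair_eq hab
  · exact (rpX_nodup n r).filter _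
  · rw [List.mem_filter]; exact ⟨rpX_mem.2 haR, by simp⟩
  · rw [List.mem_filter]; exact ⟨rpX_mem.2 hbR, by simp⟩
  · intro x hx
    rw [List.mem_filter] at hx
    simpa using hx.2

lemma filter_rpX_root {a : Fin n} (haR : a ≠ r) :
    (rpX n r).filter (fun x => decide (x = a ∨ x = r)) = [a] := by
  apply nodup_single_eq
  · exact (rpX_nodup n r).filter _
  · rw [List.mem_filter]; exact ⟨rpX_mem.2 haR, by simp⟩
  · intro x hx
    rw [List.mem_filter] at hx
    have := rpX_mem.1 hx.1
    simp only [decide_eq_true_eq] at hx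
    rcases hx.2 with h | h
    · exact h
    · exact absurd h this

lemma filter_rpX_eq {a : Fin n} (haR : a ≠ r) :
    (rpX n r).filter (fun x => decide (x = a)) = [a] := by
  apply nodup_single_eq
  · exact (rpX_nodup n r).filter _
  · rw [List.mem_filter]; exact ⟨rpX_mem.2 haR, by simp⟩
  · intro x hx
    rw [List.mem_filter] at hx
    simpa using hx.2

lemma filter_vword_true_nonroot {a b : Fin n} (haR : a ≠ r) (hbR : b ≠ r) :
    ∀ k : ℕ, 2 ≤ k → (rpVword n r true k).filter (fun x => decide (x = a ∨ x = b)) =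
      (List.replicate k ((rpX n r).filter (fun x => decide (x = a ∨ x = b)))).flatten := by
  intro k
  induction k with
  | zero => omega
  | succ k ih =>
    intro hk
    rcases Nat.lt_or_ge k 2 with hk2 | hk2
    · have hk1 : k = 1 := by omega
      subst hk1
      rw [rpVword_succ, rpVword_succ, rpVword_zero, rpShape_one, rpShape_zero]
      simp only [if_pos rfl, rpXrX]
      simp [List.filter_append, haR.symm, hbR.symm, List.replicate_succ]
    · rw [rpVword_succ, rpShape_big _ (by omega), List.filter_append, ih hk2]
      simp [List.filter_append, haR.symm, hbR.symm, List.replicate_succ]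

lemma filter_vword_false_nonroot {a b : Fin n} (haR : a ≠ r) (hbR : b ≠ r) :
    ∀ t : ℕ, 1 ≤ t → (rpVword n r false t).filter (fun x => decide (x = a ∨ x = b)) =
      (List.replicate (if t = 1 then 2 else t) ((rpX n r).filter (fun x => decide (x = a ∨ x = b)))).flatten := by
  intro t ht
  match t, ht with
  | 1, _ =>
    rw [rpVword_succ, rpVword_zero, rpShape_zero]
    simp only [if_neg (by simp : ¬ (false = true)), rpXrX]
    simp [List.filter_append, haR.symm, hbR.symm, List.replicate_succ]
  | 2, _ =>
    rw [rpVword_succ, rpVword_succ, rpVword_zero, rpShape_one, rpShape_zero]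
    simp only [if_pos rfl, rpXrX]
    simp [List.filter_append, haR.symm, hbR.symm, List.replicate_succ]
  | (k+3), _ =>
    rw [rpVword_succ, rpShape_big _ (by omega), List.filter_append,
      filter_vword_true_nonroot haR hbR _ (by omega)]
    simp [List.filter_append, haR.symm, hbR.symm, List.replicate_succ]

end Aux4

section Aux5
variable {n : ℕ} {r : Fin n}

lemma filter_rpX_root' {a : Fin n} (haR : a ≠ r) :
    (rpX n r).filter (fun x => decide (x = a) || decide (x = r)) = [a] := by
  rw [← filter_rpX_root haR]
  apply List.filter_congr
  intro x _
  simp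

lemma filter_vword_true_root {a : Fin n} (haR : a ≠ r) :
    ∀ k : ℕ, 2 ≤ k → (rpVword n r true k).filter (fun x => decide (x = a ∨ x = r)) =
      (List.replicate k [a, r]).flatten := by
  intro k
  induction k with
  | zero => omega
  | succ k ih =>
    intro hk
    rcases Nat.lt_or_ge k 2 with hk2 | hk2
    · have hk1 : k = 1 := by omega
      subst hk1
      rw [rpVword_succ, rpVword_succ, rpVword_zero, rpShape_one, rpShape_zero]
      simp only [if_pos rfl, rpXrX]
      rw [List.filter_append, List.filter_append, filter_rpX_root haR]
      simp [filter_rpX_root' haR, List.replicate_succ]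
    · rw [rpVword_succ, rpShape_big _ (by omega), List.filter_append, ih hk2]
      rw [List.filter_append, filter_rpX_root haR]
      simp [filter_rpX_root' haR, List.replicate_succ]

lemma filter_vword_false_root {a : Fin n} (haR : a ≠ r) :
    ∀ t : ℕ, 1 ≤ t → (rpVword n r false t).filter (fun x => decide (x = a ∨ x = r)) =
      if t = 1 then [a, r, a] else (List.replicate t [a, r]).flatten := by
  intro t ht
  match t, ht with
  | 1, _ =>
    rw [rpVword_succ, rpVword_zero, rpShape_zero]
    simp only [Bool.false_eq_true, if_neg, if_false, rpXrX]
    rw [List.filter_append, List.filter_append, filter_rpX_root haR]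
    simp [filter_rpX_root' haR]
  | 2, _ =>
    rw [rpVword_succ, rpVword_succ, rpVword_zero, rpShape_one, rpShape_zero]
    simp only [if_pos rfl, rpXrX]
    rw [List.filter_append, List.filter_append, List.filter_append, filter_rpX_root haR]
    simp [filter_rpX_root' haR, List.replicate_succ]
  | (k+3), _ =>
    rw [rpVword_succ, rpShape_big _ (by omega), List.filter_append,
      filter_vword_true_root haR _ (by omega)]
    rw [List.filter_append, filter_rpX_root haR]
    simp [List.replicate_succ]

end Aux5

section Aux6
variable [DecidableEq V] {n : ℕ} {r : Fin n}

lemma rpBuild_nil (seen : V → Bool) : rpBuild n r seen ([] : List V) = [] := rfl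

lemma rpBuild_cons (seen : V → Bool) (z : V) (t : List V) :
    rpBuild n r seen (z :: t) =
      (rpShape n r (seen z) (t.count z)).map (fun x => (z, x)) ++
        rpBuild n r (fun u => if u = z then true else seen u) t := rfl

lemma chain'_map_pair (v : V) (l : List (Fin n)) :
    List.Chain' (· ≠ ·) (l.map (fun x => (v, x))) ↔ List.Chain' (· ≠ ·) l := by
  simp only [List.Chain', List.isChain_map]
  constructor
  · apply List.IsChain.imp
    intro a b h
    intro hEq
    exact h (by rw [hEq])
  · apply List.IsChain.imp
    intro a b h
    simp [Prod.ext_iff]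
    intro h'
    exact absurd h' h

lemma filter_build_same (v : V) (a b : Fin n) :
    ∀ (w : List V) (seen : V → Bool),
      (rpBuild n r seen w).filter (fun z => decide (z = (v, a) ∨ z = (v, b)))
        = ((rpVword n r (seen v) (w.count v)).filter
            (fun x => decide (x = a ∨ x = b))).map (fun x => (v, x)) := by
  intro w
  induction w with
  | nil => intro seen; simp [rpBuild_nil, rpVword_zero]
  | cons z t ih =>
    intro seen
    rw [rpBuild_cons, List.filter_append, filter_map_pair, ih]
    by_cases hzv : z = v
    · subst hzv
      have hcount : (z :: t).count z = t.count z + 1 := by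
        simp [List.count_cons]
      rw [hcount, rpVword_succ, List.filter_append, List.map_append]
      congr 2
      · apply List.filter_congr
        intro x _
        simp [Prod.ext_iff]
      · simp
    · have hcount : (z :: t).count v = t.count v := by
        simp [List.count_cons, hzv]
      have hseen : (if v = z then true else seen v) = seen v := by
        rw [if_neg (fun h => hzv h.symm)]
      rw [hcount, hseen]
      have hblock : ((rpShape n r (seen z) (t.count z)).filter
          (fun x => decide ((z, x) = (v, a) ∨ (z, x) = (v, b)))) = [] := by
        apply List.filter_eq_nil_iff.2
        intro x _
        simp [Prod.ext_iff, hzv]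
      rw [hblock]
      simp

end Aux6

section Aux7
variable [DecidableEq V] {n : ℕ} {r : Fin n}

lemma filter_rpX_r : (rpX n r).filter (fun x => decide (x = r)) = [] := by
  apply List.filter_eq_nil_iff.2
  intro x hx
  simpa using rpX_mem.1 hx

lemma filter_shape_r (e : Bool) (k : ℕ) :
    (rpShape n r e k).filter (fun x => decide (x = r)) = [r] := by
  rcases Nat.lt_or_ge k 2 with hk | hk
  · interval_cases k
    · rw [rpShape_zero]
      cases e
      · simp only [Bool.false_eq_true, if_false, rpXrX]
        rw [List.filter_append, filter_rpX_r]
        simp [filter_rpX_r]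
      · simp
    · rw [rpShape_one]
      rw [rpXrX, List.filter_append, filter_rpX_r]
      simp [filter_rpX_r]
  · rw [rpShape_big _ hk, List.filter_append, filter_rpX_r]
    simp

lemma filter_build_roots (v u : V) (hvu : v ≠ u) :
    ∀ (w : List V) (seen : V → Bool),
      (rpBuild n r seen w).filter (fun z => decide (z = (v, r) ∨ z = (u, r)))
        = (w.filter (fun z => decide (z = v ∨ z = u))).map (fun z => (z, r)) := by
  intro w
  induction w with
  | nil => intro seen; simp [rpBuild_nil]
  | cons z t ih =>
    intro seen
    rw [rpBuild_cons, List.filter_append, filter_map_pair, ih]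
    by_cases hzv : z = v
    · subst hzv
      have : ((rpShape n r (seen z) (t.count z)).filter
          (fun x => decide ((z, x) = (z, r) ∨ (z, x) = (u, r)))) = [r] := by
        rw [← filter_shape_r (r := r) (seen z) (t.count z)]
        apply List.filter_congr
        intro x _
        simp [Prod.ext_iff, hvu]
      rw [this]
      have : (z :: t).filter (fun z' => decide (z' = z ∨ z' = u)) =
          z :: t.filter (fun z' => decide (z' = z ∨ z' = u)) := by
        simp
      rw [this]
      simp
    · by_cases hzu : z = u
      · subst hzu
        have : ((rpShape n r (seen z) (t.count z)).filter
            (fun x => decide ((z, x) = (v, r) ∨ (z, x) = (z, r)))) = [r] := by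
          rw [← filter_shape_r (r := r) (seen z) (t.count z)]
          apply List.filter_congr
          intro x _
          simp [Prod.ext_iff, hvu.symm]
        rw [this]
        have : (z :: t).filter (fun z' => decide (z' = v ∨ z' = z)) =
            z :: t.filter (fun z' => decide (z' = v ∨ z' = z)) := by
          simp
        rw [this]
        simp
      · have : ((rpShape n r (seen z) (t.count z)).filter
            (fun x => decide ((z, x) = (v, r) ∨ (z, x) = (u, r)))) = [] := by
          apply List.filter_eq_nil_iff.2
          intro x _
          simp [Prod.ext_iff, hzv, hzu]
        rw [this]
        have : (z :: t).filter (fun z' => decide (z' = v ∨ z' = u)) =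
            t.filter (fun z' => decide (z' = v ∨ z' = u)) := by
          simp [hzv, hzu]
        rw [this]
        simp

lemma exists_block_of_two (v : V) :
    ∀ (w : List V) (seen : V → Bool), 2 ≤ w.count v →
      ∃ A B, rpBuild n r seen w = A ++ (rpXrX n r).map (fun x => (v, x)) ++ B := by
  intro w
  induction w with
  | nil => intro seen h; simp at h
  | cons z t ih =>
    intro seen h
    rw [rpBuild_cons]
    by_cases hzv : z = v
    · subst hzv
      have hc : 1 ≤ t.count z := by
        have : (z :: t).count z = t.count z + 1 := by simp [List.count_cons]
        omega
      rcases Nat.lt_or_ge (t.count z) 2 with hk | hk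
      · have h1 : t.count z = 1 := by omega
        refine ⟨[], rpBuild n r (fun u => if u = z then true else seen u) t, ?_⟩
        rw [h1, rpShape_one]
        simp
      · obtain ⟨A, B, hAB⟩ := ih (fun u => if u = z then true else seen u) hk
        exact ⟨(rpShape n r (seen z) (t.count z)).map (fun x => (z, x)) ++ A, B,
          by rw [hAB]; simp⟩
    · have hc : 2 ≤ t.count v := by
        have : (z :: t).count v = t.count v := by simp [List.count_cons, hzv]
        omega
      obtain ⟨A, B, hAB⟩ := ih (fun u => if u = z then true else seen u) hc
      exact ⟨(rpShape n r (seen z) (t.count z)).map (fun x => (z, x)) ++ A, B,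
        by rw [hAB]; simp⟩

lemma exists_block (v : V) :
    ∀ (w : List V) (seen : V → Bool), seen v = false → v ∈ w →
      ∃ A B, rpBuild n r seen w = A ++ (rpXrX n r).map (fun x => (v, x)) ++ B := by
  intro w
  induction w with
  | nil => intro seen _ h; simp at h
  | cons z t ih =>
    intro seen hs hv
    rw [rpBuild_cons]
    by_cases hzv : z = v
    · subst hzv
      rcases Nat.lt_or_ge (t.count z) 2 with hk | hk
      · interval_cases hkk : (t.count z)
        · refine ⟨[], rpBuild n r (fun u => if u = z then true else seen u) t, ?_⟩
          rw [rpShape_zero, hs]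
          simp
        · refine ⟨[], rpBuild n r (fun u => if u = z then true else seen u) t, ?_⟩
          rw [rpShape_one]
          simp
      · obtain ⟨A, B, hAB⟩ := exists_block_of_two z t (fun u => if u = z then true else seen u) hk
        exact ⟨(rpShape n r (seen z) (t.count z)).map (fun x => (z, x)) ++ A, B,
          by rw [hAB]; simp⟩
    · have hv' : v ∈ t := by
        rcases List.mem_cons.1 hv with h | h
        · exact absurd h.symm hzv
        · exact h
      have hs' : (if v = z then true else seen v) = false := by
        rw [if_neg (fun h => hzv h.symm)]; exact hs
      obtain ⟨A, B, hAB⟩ := ih (fun u => if u = z then true else seen u) hs' hv'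
      exact ⟨(rpShape n r (seen z) (t.count z)).map (fun x => (z, x)) ++ A, B,
        by rw [hAB]; simp⟩

end Aux7

section Aux8
variable [DecidableEq V] [Fintype V] {n : ℕ} {r : Fin n}

lemma card_filter_congr_of_iff {p q : V → Prop} [DecidablePred p] [DecidablePred q] (v : V)
    (h : ∀ u, u ≠ v → (p u ↔ q u)) (hv : p v ↔ q v) :
    (Finset.univ.filter p).card = (Finset.univ.filter q).card := by
  congr 1
  ext u
  simp only [Finset.mem_filter, Finset.mem_univ, true_and]
  by_cases huv : u = v
  · subst huv; exact hv
  · exact h u huv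

lemma card_filter_succ_of {p q : V → Prop} [DecidablePred p] [DecidablePred q] (v : V)
    (h : ∀ u, u ≠ v → (p u ↔ q u)) (hp : p v) (hq : ¬ q v) :
    (Finset.univ.filter p).card = (Finset.univ.filter q).card + 1 := by
  have hset : Finset.univ.filter p = insert v (Finset.univ.filter q) := by
    ext u
    simp only [Finset.mem_filter, Finset.mem_univ, true_and, Finset.mem_insert]
    by_cases huv : u = v
    · subst huv; simp [hp]
    · rw [h u huv]; simp [huv]
  rw [hset, Finset.card_insert_of_notMem (by simp [hq])]

noncomputable def rpS (w : List V) (seen : V → Bool) : ℕ :=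
  (Finset.univ.filter (fun u => w.count u = 1 ∧ seen u = false)).card

noncomputable def rpPhi (w : List V) (seen : V → Bool) : ℕ :=
  (Finset.univ.filter (fun u => w.count u = 1 ∧ seen u = true)).card

lemma rpBuild_length (hn : 2 ≤ n) :
    ∀ (w : List V) (seen : V → Bool),
      (rpBuild n r seen w).length + (n - 1) * rpPhi w seen
        ≤ n * w.length + (n - 1) * rpS w seen := by
  intro w
  induction w with
  | nil =>
    intro seen
    simp only [rpBuild_nil, List.length_nil, Nat.mul_zero, List.length, rpPhi, rpS]
    have : (Finset.univ.filter (fun u : V => List.count u ([] : List V) = 1 ∧ seen u = true)) = ∅ := by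
      ext u; simp
    rw [this]
    simp
  | cons z t ih =>
    intro seen
    have hupd : ∀ u, u ≠ z → ((fun u => if u = z then true else seen u) u = seen u) := by
      intro u hu; simp [hu]
    have hcount : ∀ u, u ≠ z → (z :: t).count u = t.count u := by
      intro u hu
      simp [List.count_cons, Ne.symm hu]
    have hcz : (z :: t).count z = t.count z + 1 := by simp [List.count_cons]
    have hXlen : (rpX n r).length = n - 1 := rpX_length r
    have hXrXlen : (rpXrX n r).length = (n - 1) + 1 + (n - 1) := by
      simp [rpXrX, hXlen]
      omega
    have ihs := ih (fun u => if u = z then true else seen u)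
    rw [rpBuild_cons]
    simp only [List.length_append, List.length_map, List.length_cons]
    -- case analysis on shape
    rcases Nat.lt_or_ge (t.count z) 2 with hk | hk
    · interval_cases hkk : (t.count z)
      · -- k = 0
        cases he : seen z
        · -- e = false : shape = XrX, S has z, S' doesn't, Phi unchanged
          have hS : rpS (z :: t) seen = rpS t (fun u => if u = z then true else seen u) + 1 := by
            apply card_filter_succ_of z
            · intro u hu
              rw [hcount u hu, hupd u hu]
            · refine ⟨by rw [hcz], he⟩
            · simp
          have hPhi : rpPhi (z :: t) seen = rpPhi t (fun u => if u = z then true else seen u) := by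
            apply card_filter_congr_of_iff z
            · intro u hu
              rw [hcount u hu, hupd u hu]
            · simp [hkk, hcz, he]
          rw [rpShape_zero]
          simp only [Bool.false_eq_true, if_false]
          rw [hXrXlen, hS, hPhi]
          have hexp : n * (t.length + 1) = n * t.length + n := by ring
          have hexp2 : (n-1) * (rpS t (fun u => if u = z then true else seen u) + 1) = (n-1) * rpS t (fun u => if u = z then true else seen u) + (n-1) := by ring
          omega
        · -- e = true, k = 0 : shape = [r], Phi has z, Phi' doesn't, S unchanged
          have hS : rpS (z :: t) seen = rpS t (fun u => if u = z then true else seen u) := by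
            apply card_filter_congr_of_iff z
            · intro u hu
              rw [hcount u hu, hupd u hu]
            · simp [he, hkk, hcz]
          have hPhi : rpPhi (z :: t) seen = rpPhi t (fun u => if u = z then true else seen u) + 1 := by
            apply card_filter_succ_of z
            · intro u hu
              rw [hcount u hu, hupd u hu]
            · refine ⟨by rw [hcz], he⟩
            · simp [hkk]
          rw [rpShape_zero]
          simp only [if_true]
          rw [hS, hPhi]
          have hexp : n * (t.length + 1) = n * t.length + n := by ring
          have hexp2 : (n-1) * (rpPhi t (fun u => if u = z then true else seen u) + 1) = (n-1) * rpPhi t (fun u => if u = z then true else seen u) + (n-1) := by ring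
          simp only [List.length_singleton]
          omega
      · -- k = 1 : shape = XrX, Phi' has z (count t z = 1, seen' z = true), Phi doesn't, S = S'
        have hS : rpS (z :: t) seen = rpS t (fun u => if u = z then true else seen u) := by
          apply card_filter_congr_of_iff z
          · intro u hu
            rw [hcount u hu, hupd u hu]
          · simp [hcz, hkk]
        have hPhi : rpPhi t (fun u => if u = z then true else seen u) = rpPhi (z :: t) seen + 1 := by
          apply card_filter_succ_of z
          · intro u hu
            rw [hcount u hu, hupd u hu]
          · exact ⟨hkk, by simp⟩
          · rw [hcz]; simp
        rw [rpShape_one, hXrXlen, hS]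
        rw [hPhi] at ihs
        have hexp : n * (t.length + 1) = n * t.length + n := by ring
        have hexp2 : (n-1) * (rpPhi (z :: t) seen + 1) = (n-1) * rpPhi (z :: t) seen + (n-1) := by ring
        omega
    · -- k ≥ 2 : shape = X ++ [r], S = S', Phi = Phi'
      have hS : rpS (z :: t) seen = rpS t (fun u => if u = z then true else seen u) := by
        apply card_filter_congr_of_iff z
        · intro u hu
          rw [hcount u hu, hupd u hu]
        · rw [hcz]
          constructor
          · intro h; omega
          · intro h; exact absurd h.1 (by omega)
      have hPhi : rpPhi (z :: t) seen = rpPhi t (fun u => if u = z then true else seen u) := by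
        apply card_filter_congr_of_iff z
        · intro u hu
          rw [hcount u hu, hupd u hu]
        · rw [hcz]
          constructor
          · intro h; exact absurd h.1 (by omega)
          · intro h; exact absurd h.1 (by omega)
      rw [rpShape_big _ hk]
      simp only [List.length_append, List.length_singleton, hXlen]
      rw [hS, hPhi]
      have hexp : n * (t.length + 1) = n * t.length + n := by ring
      omega

end Aux8

section Aux9
variable [DecidableEq V] {n : ℕ} {r : Fin n}

lemma alternates_comm {x y : V} {w : List V} : Alternates x y w ↔ Alternates y x w := by
  unfold Alternates
  have : w.filter (fun z => decide (z = x ∨ z = y)) = w.filter (fun z => decide (z = y ∨ z = x)) := by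
    apply List.filter_congr
    intro z _
    simp [or_comm]
  rw [this]

lemma chain'_map_root (l : List V) :
    List.Chain' (· ≠ ·) (l.map (fun z => ((z, r) : V × Fin n))) ↔ List.Chain' (· ≠ ·) l := by
  simp only [List.Chain', List.isChain_map]
  constructor
  · apply List.IsChain.imp
    intro a b h hEq
    exact h (by rw [hEq])
  · apply List.IsChain.imp
    intro a b h
    simp [Prod.ext_iff]
    intro h'
    exact absurd h' h

lemma pair_of_counts {u v : V} (huv : u ≠ v) :
    ∀ (l : List V), l.count u = 1 → l.count v = 1 → (∀ x ∈ l, x = u ∨ x = v) →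
      l = [u, v] ∨ l = [v, u] := by
  intro l
  induction l with
  | nil => intro hu; simp at hu
  | cons x xs ih =>
    intro hu hv hall
    rcases hall x (by simp) with hx | hx
    · subst hx
      have hcu : xs.count x = 0 := by
        have : (x :: xs).count x = xs.count x + 1 := by simp [List.count_cons]
        omega
      have hcv : xs.count v = 1 := by
        have : (x :: xs).count v = xs.count v := by simp [List.count_cons, huv]
        omega
      have hallv : ∀ y ∈ xs, y = v := by
        intro y hy
        rcases hall y (by simp [hy]) with h | h
        · exfalso
          rw [← List.count_pos_iff] at hy
          rw [h] at hy
          omega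
        · exact h
      have : xs = List.replicate xs.length v := List.eq_replicate_of_mem hallv
      rw [this] at hcv
      simp at hcv
      left
      rw [this, hcv]
      simp
    · subst hx
      have hcv : xs.count x = 0 := by
        have : (x :: xs).count x = xs.count x + 1 := by simp [List.count_cons]
        omega
      have hcu : xs.count u = 1 := by
        have : (x :: xs).count u = xs.count u := by simp [List.count_cons, Ne.symm huv]
        omega
      have hallu : ∀ y ∈ xs, y = u := by
        intro y hy
        rcases hall y (by simp [hy]) with h | h
        · exact h
        · exfalso
          rw [← List.count_pos_iff] at hy
          rw [h] at hy
          omega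
      have : xs = List.replicate xs.length u := List.eq_replicate_of_mem hallu
      rw [this] at hcu
      simp at hcu
      right
      rw [this, hcu]
      simp

lemma singles_alternate {u v : V} (huv : u ≠ v) {w : List V}
    (hu : w.count u = 1) (hv : w.count v = 1) : Alternates u v w := by
  unfold Alternates
  have hcu : (w.filter (fun z => decide (z = u ∨ z = v))).count u = 1 := by
    rw [List.count_filter (by simp)]
    exact hu
  have hcv : (w.filter (fun z => decide (z = u ∨ z = v))).count v = 1 := by
    rw [List.count_filter (by simp)]
    exact hv
  have hall : ∀ x ∈ w.filter (fun z => decide (z = u ∨ z = v)), x = u ∨ x = v := by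
    intro x hx
    have := (List.mem_filter.1 hx).2
    simpa using this
  rcases pair_of_counts huv _ hcu hcv hall with h | h <;> rw [h] <;> simp [List.Chain', huv, huv.symm]

end Aux9

section Aux10
variable [DecidableEq V] {n : ℕ} {r : Fin n}

lemma build_alt_same_helper (v : V) {a b : Fin n} (haR : a ≠ r) (hab : a ≠ b)
    (w : List V) (hv : v ∈ w) :
    Alternates (v, a) (v, b) (rpBuild n r (fun _ => false) w) := by
  unfold Alternates
  rw [filter_build_same, chain'_map_pair]
  have ht : 1 ≤ w.count v := List.count_pos_iff.2 hv
  by_cases hbR : b = r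
  · subst hbR
    rw [filter_vword_false_root haR _ ht]
    split_ifs
    · simp [List.Chain', haR, Ne.symm haR]
    · exact chain'_join_replicate haR _
  · rw [filter_vword_false_nonroot haR hbR _ ht]
    rcases filter_rpX_pair haR hbR hab with h | h <;> rw [h]
    · exact chain'_join_replicate hab _
    · exact chain'_join_replicate (Ne.symm hab) _

lemma build_alt_same (v : V) {a b : Fin n} (hab : a ≠ b) (w : List V) (hv : v ∈ w) :
    Alternates (v, a) (v, b) (rpBuild n r (fun _ => false) w) := by
  by_cases haR : a = r
  · subst haR
    rw [alternates_comm]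
    exact build_alt_same_helper v (Ne.symm hab) (Ne.symm hab) w hv
  · exact build_alt_same_helper v haR hab w hv

lemma build_not_alt_cross (v u : V) (hvu : u ≠ v) {a : Fin n} (haR : a ≠ r) (b : Fin n)
    (w : List V) (hv : v ∈ w) :
    ¬ Alternates (v, a) (u, b) (rpBuild n r (fun _ => false) w) := by
  obtain ⟨A, B, hAB⟩ := exists_block v w (fun _ => false) rfl hv
  unfold Alternates
  rw [hAB, List.filter_append, List.filter_append, filter_map_pair]
  have hmid : ((rpXrX n r).filter (fun x => decide ((v, x) = (v, a) ∨ (v, x) = (u, b)))) =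
      [a, a] := by
    have hcongr : ((rpXrX n r).filter (fun x => decide ((v, x) = (v, a) ∨ (v, x) = (u, b)))) =
        ((rpXrX n r).filter (fun x => decide (x = a))) := by
      apply List.filter_congr
      intro x _
      simp [Prod.ext_iff, Ne.symm hvu]
    rw [hcongr, rpXrX, List.filter_append]
    rw [filter_rpX_eq haR]
    have : (r :: rpX n r).filter (fun x => decide (x = a)) = [a] := by
      have : (r :: rpX n r).filter (fun x => decide (x = a)) =
          (rpX n r).filter (fun x => decide (x = a)) := by
        simp [Ne.symm haR]
      rw [this, filter_rpX_eq haR]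
    rw [this]
    rfl
  rw [hmid]
  simp only [List.map_cons, List.map_nil]
  intro hchain
  rw [List.append_assoc] at hchain
  exact not_chain'_of_dup (p := ((v, a) : V × Fin n))
    (A := (A.filter (fun z => decide (z = (v, a) ∨ z = (u, b)))))
    (B := (B.filter (fun z => decide (z = (v, a) ∨ z = (u, b))))) (by simpa using hchain)

lemma build_alt_roots (v u : V) (hvu : v ≠ u) (w : List V) :
    Alternates (v, r) (u, r) (rpBuild n r (fun _ => false) w) ↔ Alternates v u w := by
  unfold Alternates
  rw [filter_build_roots v u hvu, chain'_map_root]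

lemma build_mem (v : V) (a : Fin n) (w : List V) (hv : v ∈ w) :
    (v, a) ∈ rpBuild n r (fun _ => false) w := by
  obtain ⟨A, B, hAB⟩ := exists_block v w (fun _ => false) rfl hv
  rw [hAB]
  have : a ∈ rpXrX n r := by
    by_cases haR : a = r
    · subst haR; simp [rpXrX]
    · simp [rpXrX]
      left
      exact rpX_mem.2 haR
  simp only [List.mem_append, List.mem_map]
  left; right
  exact ⟨a, this, rfl⟩

end Aux10

lemma rootedProd_adj {U : Type*} (G : SimpleGraph V) (H : SimpleGraph U) (r : U)
    (p q : V × U) :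
    (rootedProd G H r).Adj p q ↔
      (p.1 = q.1 ∧ H.Adj p.2 q.2) ∨ (p.2 = r ∧ q.2 = r ∧ G.Adj p.1 q.1) := Iff.rfl

theorem stmt18 [Fintype V] [DecidableEq V] (G : SimpleGraph V)
    (h : WordRepresentable G) (n : ℕ) (hn : 2 ≤ n) (r : Fin n) :
    reprLen (rootedProd G (⊤ : SimpleGraph (Fin n)) r)
      ≤ n * reprLen G + (n - 1) * G.cliqueNum := by
  classical
  obtain ⟨w', hw'⟩ := h
  have hne : {m | ∃ w : List V, Represents G w ∧ w.length = m}.Nonempty :=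
    ⟨w'.length, w', hw', rfl⟩
  have hmem : reprLen G ∈ {m | ∃ w : List V, Represents G w ∧ w.length = m} :=
    Nat.sInf_mem hne
  obtain ⟨w₀, hw₀, hlen₀⟩ := hmem
  set W := rpBuild n r (fun _ : V => false) w₀ with hW
  have hrepW : Represents (rootedProd G (⊤ : SimpleGraph (Fin n)) r) W := by
    constructor
    · rintro ⟨v, a⟩
      exact build_mem v a w₀ (hw₀.1 v)
    · rintro ⟨v, a⟩ ⟨u, b⟩ hpq
      rw [rootedProd_adj]
      by_cases hvu : v = u
      · subst hvu
        have hab : a ≠ b := fun hEq => hpq (by rw [hEq])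
        constructor
        · intro _
          exact build_alt_same v hab w₀ (hw₀.1 v)
        · intro _
          exact Or.inl ⟨rfl, by simp [hab]⟩
      · by_cases hroot : a = r ∧ b = r
        · obtain ⟨ha, hb⟩ := hroot
          subst ha; subst hb
          constructor
          · intro hadj
            rcases hadj with ⟨h1, _⟩ | ⟨_, _, h3⟩
            · exact absurd h1 hvu
            · exact (build_alt_roots v u hvu w₀).2 ((hw₀.2 v u hvu).1 h3)
          · intro halt
            exact Or.inr ⟨rfl, rfl, (hw₀.2 v u hvu).2 ((build_alt_roots v u hvu w₀).1 halt)⟩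
        · constructor
          · intro hadj
            rcases hadj with ⟨h1, _⟩ | ⟨ha, hb, _⟩
            · exact absurd h1 hvu
            · exact absurd ⟨ha, hb⟩ hroot
          · intro halt
            exfalso
            by_cases haR : a = r
            · have hbR : b ≠ r := fun hbr => hroot ⟨haR, hbr⟩
              exact build_not_alt_cross u v hvu hbR a w₀ (hw₀.1 u) (alternates_comm.1 halt)
            · exact build_not_alt_cross v u (fun hEq => hvu hEq.symm) haR b w₀ (hw₀.1 v) halt
  have hlenW : W.length ≤ n * w₀.length + (n - 1) * rpS w₀ (fun _ : V => false) := by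
    have hb := rpBuild_length (r := r) hn w₀ (fun _ : V => false)
    have hphi : rpPhi w₀ (fun _ : V => false) = 0 := by
      unfold rpPhi
      have : (Finset.univ.filter
          (fun u : V => w₀.count u = 1 ∧ (fun _ : V => false) u = true)) = ∅ := by
        ext u; simp
      rw [this]
      simp
    rw [hphi] at hb
    simpa using hb
  have hclique : rpS w₀ (fun _ : V => false) ≤ G.cliqueNum := by
    unfold rpS
    have hset : (Finset.univ.filter
        (fun u : V => w₀.count u = 1 ∧ (fun _ : V => false) u = false)) =
        (Finset.univ.filter (fun u : V => w₀.count u = 1)) := by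
      ext u; simp
    rw [hset]
    have hcl : G.IsClique ↑(Finset.univ.filter (fun u : V => w₀.count u = 1)) := by
      intro x hx y hy hxy
      simp only [Finset.coe_filter, Set.mem_setOf_eq, Finset.mem_univ, true_and] at hx hy
      exact (hw₀.2 x y hxy).2 (singles_alternate hxy hx hy)
    exact SimpleGraph.IsClique.card_le_cliqueNum (tc := hcl)
  have hfin : reprLen (rootedProd G (⊤ : SimpleGraph (Fin n)) r) ≤ W.length :=
    Nat.sInf_le ⟨W, hrepW, rfl⟩
  have hmul : (n - 1) * rpS w₀ (fun _ : V => false) ≤ (n - 1) * G.cliqueNum :=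
    Nat.mul_le_mul_left _ hclique
  have hw0len : n * w₀.length = n * reprLen G := by rw [hlen₀]
  omega
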